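/- The blown-up system dx/dt = x(S(1-x)(A+xy) + x(M-xy)(xy-1)(A+xy) - Qx y), dy/dt = S(x-1)(xy+A)y, with A, M, Q, S > 0, has Jacobian at (0,0) equal to diag(AS, -AS); hence (0,0) is a hyperbolic saddle of the blown-up system. -/

import Mathlib

/-- The Jacobian of the blown-up system at (0,0) equals diag(AS, -AS); both
diagonal entries are nonzero with opposite signs, so (0,0) is a hyperbolic saddle. -/
theorem blowup_origin_saddle (A M Q S : ℝ)
    (hA : 0 < A) (hM : 0 < M) (hQ : 0 < Q) (hS : 0 < S) :
    (fderiv ℝ (fun p : ℝ × ℝ =>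
        (p.1 * (S * (1 - p.1) * (A + p.1 * p.2)
            + p.1 * (M - p.1 * p.2) * (p.1 * p.2 - 1) * (A + p.1 * p.2)
            - Q * p.1 * p.2),
         S * (p.1 - 1) * (p.1 * p.2 + A) * p.2)) (0, 0)) (1, 0) = (A * S, 0) ∧
    (fderiv ℝ (fun p : ℝ × ℝ =>
        (p.1 * (S * (1 - p.1) * (A + p.1 * p.2)
            + p.1 * (M - p.1 * p.2) * (p.1 * p.2 - 1) * (A + p.1 * p.2)
            - Q * p.1 * p.2),
         S * (p.1 - 1) * (p.1 * p.2 + A) * p.2)) (0, 0)) (0, 1) = (0, -(A * S)) ∧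
    0 < A * S ∧ -(A * S) < 0 := by
  set g : ℝ × ℝ → ℝ := fun p =>
    S * (1 - p.1) * (A + p.1 * p.2)
      + p.1 * (M - p.1 * p.2) * (p.1 * p.2 - 1) * (A + p.1 * p.2)
      - Q * p.1 * p.2 with hgdef
  set h : ℝ × ℝ → ℝ := fun p => S * (p.1 - 1) * (p.1 * p.2 + A) with hhdef
  have hgd : DifferentiableAt ℝ g ((0, 0) : ℝ × ℝ) := by
    simp only [hgdef]; fun_prop
  have hhd : DifferentiableAt ℝ h ((0, 0) : ℝ × ℝ) := by
    simp only [hhdef]; fun_prop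
  have h1 : HasFDerivAt (fun p : ℝ × ℝ => p.1 * g p)
      (((0, 0) : ℝ × ℝ).1 • fderiv ℝ g (0, 0)
        + g (0, 0) • ContinuousLinearMap.fst ℝ ℝ ℝ) ((0, 0) : ℝ × ℝ) :=
    (hasFDerivAt_fst).mul hgd.hasFDerivAt
  have h2 : HasFDerivAt (fun p : ℝ × ℝ => h p * p.2)
      (h (0, 0) • ContinuousLinearMap.snd ℝ ℝ ℝ
        + ((0, 0) : ℝ × ℝ).2 • fderiv ℝ h (0, 0)) ((0, 0) : ℝ × ℝ) :=
    hhd.hasFDerivAt.mul hasFDerivAt_snd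
  have hf := (HasFDerivAt.prodMk h1 h2).fderiv
  have hfun : (fun p : ℝ × ℝ =>
        (p.1 * (S * (1 - p.1) * (A + p.1 * p.2)
            + p.1 * (M - p.1 * p.2) * (p.1 * p.2 - 1) * (A + p.1 * p.2)
            - Q * p.1 * p.2),
         S * (p.1 - 1) * (p.1 * p.2 + A) * p.2))
      = fun p : ℝ × ℝ => (p.1 * g p, h p * p.2) := rfl
  rw [hfun, hf]
  have hg0 : g 0 = A * S := by simp [hgdef]; ring
  have hh0 : h 0 = -(A * S) := by simp [hhdef]; ring
  refine ⟨?_, ?_, by positivity, by simp; positivity⟩ <;>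
    simp [ContinuousLinearMap.prod_apply, Prod.mk_zero_zero, hg0, hh0]
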